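/- Let A ∈ ℂ^{M×N} have SVD A = U₁Σ₁V₁* + U₂Σ₂V₂* with rank(U₁Σ₁V₁*) = r, and let Ω ∈ ℝ^{N×(r+p)}. Set Ω₁ = V₁*Ω and Ω₂ = V₂*Ω, and suppose Ω₁ has a right inverse, i.e. Ω₁ Ω₁† = I_{r×r}. Then with à = AΩ and L = U₁Σ₁V₁*, one has L = à Ω₁† V₁* − U₂Σ₂Ω₂Ω₁† V₁*. -/
import Mathlib

open Matrix

/-- Key identity in the randomized SVD analysis: with `A = U₁Σ₁V₁* + U₂Σ₂V₂*`,
`Ã = AΩ`, `Ω₁ = V₁*Ω`, `Ω₂ = V₂*Ω`, and `Ω₁Ω₁† = I`, one has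
`L = ÃΩ₁†V₁* − U₂Σ₂Ω₂Ω₁†V₁*` for `L = U₁Σ₁V₁*`. -/
theorem randomized_svd_L_identity {M N r s p : ℕ}
    (A : Matrix (Fin M) (Fin N) ℂ)
    (U₁ : Matrix (Fin M) (Fin r) ℂ) (U₂ : Matrix (Fin M) (Fin s) ℂ)
    (V₁ : Matrix (Fin N) (Fin r) ℂ) (V₂ : Matrix (Fin N) (Fin s) ℂ)
    (S₁ : Matrix (Fin r) (Fin r) ℂ) (S₂ : Matrix (Fin s) (Fin s) ℂ)
    (Ω : Matrix (Fin N) (Fin (r + p)) ℝ)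
    (Ω₁d : Matrix (Fin (r + p)) (Fin r) ℂ)
    (hA : A = U₁ * S₁ * V₁ᴴ + U₂ * S₂ * V₂ᴴ)
    (hrank : (U₁ * S₁ * V₁ᴴ).rank = r)
    (hright : (V₁ᴴ * Ω.map Complex.ofReal) * Ω₁d = 1) :
    U₁ * S₁ * V₁ᴴ =
      (A * Ω.map Complex.ofReal) * Ω₁d * V₁ᴴ
        - U₂ * S₂ * (V₂ᴴ * Ω.map Complex.ofReal) * Ω₁d * V₁ᴴ := by
  subst hA
  have h : U₁ * S₁ * (V₁ᴴ * Ω.map Complex.ofReal * Ω₁d) = U₁ * S₁ := by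
    rw [hright, Matrix.mul_one]
  calc U₁ * S₁ * V₁ᴴ
      = U₁ * S₁ * (V₁ᴴ * Ω.map Complex.ofReal * Ω₁d) * V₁ᴴ := by rw [h]
    _ = ((U₁ * S₁ * V₁ᴴ + U₂ * S₂ * V₂ᴴ) * Ω.map Complex.ofReal) * Ω₁d * V₁ᴴ
        - U₂ * S₂ * (V₂ᴴ * Ω.map Complex.ofReal) * Ω₁d * V₁ᴴ := by
        simp only [Matrix.add_mul, Matrix.mul_assoc]
        abel
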